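/- Let (X, S) ~ π be a random pair on 𝒳 × 𝒮, W = S − X, and let Y be generated by a conditional pmf a(y | x, s) with a(𝒴₀(s − x) | x, s) = 1. Define ξ(w) = Σ_{(x,s): s−x=w} π(x,s), b(y | w) = Σ_{(x,s): s−x=w} a(y | x,s) π(x,s) / ξ(w) (for ξ(w) > 0), and ã(y | x, s) = b(y | s − x). Let Ỹ be generated from (X, S) by ã instead of a. Then: (1) the joint law of (W, Y) equals the joint law of (W, Ỹ); in particular Y and Ỹ have the same marginal law; (2) with S₊ = W + Y and S̃₊ = W + Ỹ, the conditional law of S₊ given Y equals the conditional law of S̃₊ given Ỹ; (3) I(X, S; Y) ≥ I(W; Y) = I(X, S; Ỹ) = I(W; Ỹ) = I(b; ξ). -/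

import Mathlib

open Finset
open scoped Classical

namespace SmartMeter

/-! ### Basic information measures for finitely supported distributions.
All entropies and mutual informations are in bits (base-2 logarithms). -/

/-- Probability that the random variable `Z` takes the value `z` under the pmf `p`. -/
noncomputable def pr {Ω α : Type*} [Fintype Ω] [DecidableEq α]
    (p : Ω → ℝ) (Z : Ω → α) (z : α) : ℝ :=
  ∑ ω ∈ Finset.univ.filter (fun ω => Z ω = z), p ω

/-- Shannon entropy (in bits) of the random variable `Z` under the pmf `p`. -/
noncomputable def ent {Ω α : Type*} [Fintype Ω] [DecidableEq α]
    (p : Ω → ℝ) (Z : Ω → α) : ℝ :=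
  -∑ z ∈ Finset.univ.image Z, pr p Z z * Real.logb 2 (pr p Z z)

/-- Mutual information `I(A; B)`. -/
noncomputable def mutInfo {Ω α β : Type*} [Fintype Ω] [DecidableEq α] [DecidableEq β]
    (p : Ω → ℝ) (A : Ω → α) (B : Ω → β) : ℝ :=
  ent p A + ent p B - ent p (fun ω => (A ω, B ω))

/-- Conditional entropy `H(A | C)`. -/
noncomputable def condEnt {Ω α γ : Type*} [Fintype Ω] [DecidableEq α] [DecidableEq γ]
    (p : Ω → ℝ) (A : Ω → α) (C : Ω → γ) : ℝ :=
  ent p (fun ω => (A ω, C ω)) - ent p C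

/-- Conditional mutual information `I(A; B | C)`. -/
noncomputable def condMutInfo {Ω α β γ : Type*} [Fintype Ω] [DecidableEq α] [DecidableEq β]
    [DecidableEq γ] (p : Ω → ℝ) (A : Ω → α) (B : Ω → β) (C : Ω → γ) : ℝ :=
  ent p (fun ω => (A ω, C ω)) + ent p (fun ω => (B ω, C ω))
    - ent p (fun ω => (A ω, B ω, C ω)) - ent p C

/-- `p` is a probability mass function on the finite type `Ω`. -/
def IsPMF {Ω : Type*} [Fintype Ω] (p : Ω → ℝ) : Prop :=
  (∀ ω, 0 ≤ p ω) ∧ ∑ ω, p ω = 1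

/-- Extension of a pmf on `{0, …, n}` to an integer-indexed function (zero out of range). -/
noncomputable def extZ {n : ℕ} (f : Fin (n + 1) → ℝ) (k : ℤ) : ℝ :=
  if h : 0 ≤ k ∧ k ≤ (n : ℤ) then f ⟨k.toNat, by omega⟩ else 0

/-! ### The single-letter quantity `J*` -/

/-- `I(S - X; X)` for independent `X ~ PX` on `{0,…,mx}` and `S ~ θ` on `{0,…,ms}`. -/
noncomputable def iidMI (mx ms : ℕ) (PX : Fin (mx + 1) → ℝ) (θ : Fin (ms + 1) → ℝ) : ℝ :=
  mutInfo (fun ω : Fin (mx + 1) × Fin (ms + 1) => PX ω.1 * θ ω.2)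
    (fun ω => ((ω.2 : ℕ) : ℤ) - ((ω.1 : ℕ) : ℤ)) (fun ω => ω.1)

/-- `J* = min over pmfs θ on 𝒮 of I(S - X; X)`. -/
noncomputable def Jstar (mx ms : ℕ) (PX : Fin (mx + 1) → ℝ) : ℝ :=
  sInf {r : ℝ | ∃ θ : Fin (ms + 1) → ℝ, IsPMF θ ∧ iidMI mx ms PX θ = r}

/-! ### The structured policy `b*` -/

/-- `ξ(w) = Σ_{(x,s) : s - x = w} PX(x) θ(s)`, the pmf of `W = S - X`. -/
noncomputable def xiOf (mx ms : ℕ) (PX : Fin (mx + 1) → ℝ) (θ : Fin (ms + 1) → ℝ)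
    (w : ℤ) : ℝ :=
  ∑ x : Fin (mx + 1), ∑ s : Fin (ms + 1),
    if ((s : ℕ) : ℤ) - ((x : ℕ) : ℤ) = w then PX x * θ s else 0

/-- The structured policy with respect to `(θ, ξ)`:
`b(y|w) = PX(y) θ(y + w) / ξ(w)` for `y ∈ 𝒳 ∩ 𝒴₀(w)` (when `ξ(w) > 0`), else `0`. -/
noncomputable def bstar (mx my ms : ℕ) (PX : Fin (mx + 1) → ℝ) (θ : Fin (ms + 1) → ℝ)
    (w : ℤ) (y : Fin (my + 1)) : ℝ :=
  if xiOf mx ms PX θ w = 0 then 0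
  else extZ PX ((y : ℕ) : ℤ) * extZ θ (((y : ℕ) : ℤ) + w) / xiOf mx ms PX θ w

/-! ### Trajectory spaces, policies and induced joint laws.
Time is indexed from `0`; `ω = (s₁, x, y)` records the initial battery state `S₁ = ω.1`,
the demands `X_{t+1} = ω.2.1 t` and the outputs `Y_{t+1} = ω.2.2 t` for `t = 0, …, T-1`. -/

/-- Trajectories of horizon `T`. -/
abbrev Traj (mx my ms T : ℕ) :=
  Fin (ms + 1) × (Fin T → Fin (mx + 1)) × (Fin T → Fin (my + 1))

variable {mx my ms T : ℕ}

/-- Demand at (0-based) time `t`, as an integer (junk value `0` for `t ≥ T`). -/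
def Xat (ω : Traj mx my ms T) (t : ℕ) : ℤ :=
  if h : t < T then ((ω.2.1 ⟨t, h⟩ : ℕ) : ℤ) else 0

/-- Output at (0-based) time `t`, as an integer (junk value `0` for `t ≥ T`). -/
def Yat (ω : Traj mx my ms T) (t : ℕ) : ℤ :=
  if h : t < T then ((ω.2.2 ⟨t, h⟩ : ℕ) : ℤ) else 0

/-- Battery state at (0-based) time `t`: `S_{t+1} = S_t + Y_t - X_t`, `Sat ω 0 = S₁`. -/
def Sat (ω : Traj mx my ms T) (t : ℕ) : ℤ :=
  ((ω.1 : ℕ) : ℤ) + ∑ i ∈ Finset.range t, (Yat ω i - Xat ω i)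

/-- `W_t = S_t - X_t`. -/
def Wat (ω : Traj mx my ms T) (t : ℕ) : ℤ := Sat ω t - Xat ω t

/-- A general causal (class `Q_A`) randomized battery policy:
`q_t(y_t | x^t, s^t, y^{t-1})`; since `s^t` is determined by `(s₁, x^{t-1}, y^{t-1})`,
the policy is a function of `(x^t, s₁, y^{t-1})`. -/
def PolicyA (mx my ms : ℕ) : Type :=
  (t : ℕ) → (Fin (t + 1) → Fin (mx + 1)) → Fin (ms + 1) → (Fin t → Fin (my + 1)) →
    Fin (my + 1) → ℝ

/-- A class-`Q_B` policy: `q_t(y_t | x_t, s_t, y^{t-1})`. -/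
def PolicyB (mx my ms : ℕ) : Type :=
  (t : ℕ) → Fin (mx + 1) → ℤ → (Fin t → Fin (my + 1)) → Fin (my + 1) → ℝ

/-- The battery state `S_t` computed from `s₁` and the history `(x^t, y^{t-1})`. -/
def hstate {t : ℕ} (s1 : Fin (ms + 1)) (x : Fin (t + 1) → Fin (mx + 1))
    (y : Fin t → Fin (my + 1)) : ℤ :=
  ((s1 : ℕ) : ℤ) + ∑ i : Fin t, (((y i : ℕ) : ℤ) - ((x i.castSucc : ℕ) : ℤ))

/-- Each `q_t(· | x^t, s^t, y^{t-1})` is a pmf on `𝒴`. -/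
def CondPMFA (q : PolicyA mx my ms) : Prop :=
  ∀ (t : ℕ) (x : Fin (t + 1) → Fin (mx + 1)) (s1 : Fin (ms + 1)) (y : Fin t → Fin (my + 1)),
    (∀ yt, 0 ≤ q t x s1 y yt) ∧ ∑ yt, q t x s1 y yt = 1

/-- Feasibility of a class-`Q_A` policy: conditional pmfs supported on
`𝒴₀(s_t - x_t) = {y ∈ 𝒴 : s_t - x_t + y ∈ 𝒮}`. -/
def FeasibleA (q : PolicyA mx my ms) : Prop :=
  CondPMFA q ∧
  ∀ (t : ℕ) (x : Fin (t + 1) → Fin (mx + 1)) (s1 : Fin (ms + 1)) (y : Fin t → Fin (my + 1)),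
    ∀ yt, q t x s1 y yt ≠ 0 →
      0 ≤ hstate s1 x y - ((x (Fin.last t) : ℕ) : ℤ) + ((yt : ℕ) : ℤ) ∧
      hstate s1 x y - ((x (Fin.last t) : ℕ) : ℤ) + ((yt : ℕ) : ℤ) ≤ (ms : ℤ)

/-- Each `q_t(· | x_t, s_t, y^{t-1})` is a pmf on `𝒴`. -/
def CondPMFB (q : PolicyB mx my ms) : Prop :=
  ∀ (t : ℕ) (xt : Fin (mx + 1)) (s : ℤ) (y : Fin t → Fin (my + 1)),
    (∀ yt, 0 ≤ q t xt s y yt) ∧ ∑ yt, q t xt s y yt = 1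

/-- Feasibility of a class-`Q_B` policy. -/
def FeasibleB (q : PolicyB mx my ms) : Prop :=
  CondPMFB q ∧
  ∀ (t : ℕ) (xt : Fin (mx + 1)) (s : ℤ) (y : Fin t → Fin (my + 1)),
    0 ≤ s → s ≤ (ms : ℤ) →
    ∀ yt, q t xt s y yt ≠ 0 →
      0 ≤ s - ((xt : ℕ) : ℤ) + ((yt : ℕ) : ℤ) ∧
      s - ((xt : ℕ) : ℤ) + ((yt : ℕ) : ℤ) ≤ (ms : ℤ)

/-- The demand prefix `x^t = (x_0, …, x_t)` of a trajectory. -/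
def prefX (ω : Traj mx my ms T) (t : Fin T) : Fin ((t : ℕ) + 1) → Fin (mx + 1) :=
  fun i => ω.2.1 ⟨(i : ℕ), lt_of_le_of_lt (Nat.lt_succ_iff.mp i.isLt) t.isLt⟩

/-- The output prefix `y^{t-1} = (y_0, …, y_{t-1})` of a trajectory. -/
def prefY (ω : Traj mx my ms T) (t : Fin T) : Fin (t : ℕ) → Fin (my + 1) :=
  fun i => ω.2.2 ⟨(i : ℕ), i.isLt.trans t.isLt⟩

/-- Joint law on trajectories induced by i.i.d. demand `PX`, initial battery pmf `PS1`
(independent of the demand), and a class-`Q_A` policy `q`. -/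
noncomputable def jointA (PS1 : Fin (ms + 1) → ℝ) (PX : Fin (mx + 1) → ℝ)
    (q : PolicyA mx my ms) (T : ℕ) (ω : Traj mx my ms T) : ℝ :=
  PS1 ω.1 * ∏ t : Fin T,
    (PX (ω.2.1 t) * q (t : ℕ) (prefX ω t) ω.1 (prefY ω t) (ω.2.2 t))

/-- Weight of a demand trajectory under a Markov chain `(PX1, Qm)`. -/
noncomputable def markovWt (PX1 : Fin (mx + 1) → ℝ) (Qm : Fin (mx + 1) → Fin (mx + 1) → ℝ)
    {T : ℕ} (x : Fin T → Fin (mx + 1)) : ℝ :=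
  ∏ t : Fin T,
    if _h : (t : ℕ) = 0 then PX1 (x t)
    else Qm (x ⟨(t : ℕ) - 1, lt_of_le_of_lt (Nat.sub_le _ _) t.isLt⟩) (x t)

/-- Joint law on trajectories induced by Markov demand and a class-`Q_A` policy. -/
noncomputable def jointAMarkov (PS1 : Fin (ms + 1) → ℝ) (PX1 : Fin (mx + 1) → ℝ)
    (Qm : Fin (mx + 1) → Fin (mx + 1) → ℝ) (q : PolicyA mx my ms) (T : ℕ)
    (ω : Traj mx my ms T) : ℝ :=
  PS1 ω.1 * markovWt PX1 Qm ω.2.1 *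
    ∏ t : Fin T, q (t : ℕ) (prefX ω t) ω.1 (prefY ω t) (ω.2.2 t)

/-- Joint law on trajectories induced by Markov demand and a class-`Q_B` policy. -/
noncomputable def jointBMarkov (PS1 : Fin (ms + 1) → ℝ) (PX1 : Fin (mx + 1) → ℝ)
    (Qm : Fin (mx + 1) → Fin (mx + 1) → ℝ) (q : PolicyB mx my ms) (T : ℕ)
    (ω : Traj mx my ms T) : ℝ :=
  PS1 ω.1 * markovWt PX1 Qm ω.2.1 *
    ∏ t : Fin T, q (t : ℕ) (ω.2.1 t) (Sat ω (t : ℕ)) (prefY ω t) (ω.2.2 t)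

/-- The memoryless time-invariant policy `q_t(y | x, s) = b*(y | s - x)`, as a member of the
class of general causal policies. -/
noncomputable def structuredPolicyA (mx my ms : ℕ) (PX : Fin (mx + 1) → ℝ)
    (θ : Fin (ms + 1) → ℝ) : PolicyA mx my ms :=
  fun t x s1 y yt => bstar mx my ms PX θ (hstate s1 x y - ((x (Fin.last t) : ℕ) : ℤ)) yt


/-- The pmf `ξ` of `W = S - X` when `(X, S) ~ π`. -/
noncomputable def xiPi (mx ms : ℕ) (π : Fin (mx + 1) × Fin (ms + 1) → ℝ) (w : ℤ) : ℝ :=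
  ∑ x : Fin (mx + 1), ∑ s : Fin (ms + 1),
    if ((s : ℕ) : ℤ) - ((x : ℕ) : ℤ) = w then π (x, s) else 0

/-- `b(y | w) = Σ_{(x,s) : s - x = w} a(y | x, s) π(x, s) / ξ(w)`. -/
noncomputable def bOf (mx my ms : ℕ) (π : Fin (mx + 1) × Fin (ms + 1) → ℝ)
    (a : Fin (mx + 1) → Fin (ms + 1) → Fin (my + 1) → ℝ) (w : ℤ) (y : Fin (my + 1)) : ℝ :=
  (∑ x : Fin (mx + 1), ∑ s : Fin (ms + 1),
      if ((s : ℕ) : ℤ) - ((x : ℕ) : ℤ) = w then a x s y * π (x, s) else 0)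
    / xiPi mx ms π w

/-- The joint pmf of `(W, Y)` with `W ~ ξ` (induced by `π`) and `Y | W ~ b`;
its mutual information is `I(b; ξ)`.  The index `i` encodes `w = i - mx ∈ 𝒲`. -/
noncomputable def pWY (mx my ms : ℕ) (π : Fin (mx + 1) × Fin (ms + 1) → ℝ)
    (a : Fin (mx + 1) → Fin (ms + 1) → Fin (my + 1) → ℝ)
    (ω : Fin (mx + ms + 1) × Fin (my + 1)) : ℝ :=
  ∑ x : Fin (mx + 1), ∑ s : Fin (ms + 1),
    if ((s : ℕ) : ℤ) - ((x : ℕ) : ℤ) = ((ω.1 : ℕ) : ℤ) - (mx : ℤ)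
      then π (x, s) * a x s ω.2 else 0

section Helpers
variable {Ω Ω' α β γ : Type*} [Fintype Ω] [Fintype Ω'] [DecidableEq α] [DecidableEq β]
  [DecidableEq γ]

lemma pr_eq_sum_ite (p : Ω → ℝ) (Z : Ω → α) (z : α) :
    pr p Z z = ∑ ω, if Z ω = z then p ω else 0 := by
  rw [pr, Finset.sum_filter]

lemma pr_nonneg {p : Ω → ℝ} (hp : ∀ ω, 0 ≤ p ω) (Z : Ω → α) (z : α) : 0 ≤ pr p Z z :=
  Finset.sum_nonneg fun ω _ => hp ω

lemma pr_zero_of_not_mem {p : Ω → ℝ} {Z : Ω → α} {z : α}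
    (h : z ∉ Finset.univ.image Z) : pr p Z z = 0 := by
  rw [pr, Finset.sum_eq_zero]
  intro ω hω
  exact absurd (Finset.mem_image.2 ⟨ω, Finset.mem_univ ω, (Finset.mem_filter.1 hω).2⟩) h

/-- grouping sums by a random variable's value -/
lemma sum_pr_mul (p : Ω → ℝ) (Z : Ω → α) (h : α → ℝ) :
    ∑ z ∈ Finset.univ.image Z, pr p Z z * h z = ∑ ω, p ω * h (Z ω) := by
  rw [← Finset.sum_fiberwise_of_maps_to (fun ω _ => Finset.mem_image_of_mem Z (Finset.mem_univ ω))
    (fun ω => p ω * h (Z ω))]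
  refine Finset.sum_congr rfl fun z _ => ?_
  rw [pr, Finset.sum_mul]
  exact Finset.sum_congr rfl fun ω hω => by rw [(Finset.mem_filter.1 hω).2]

lemma ent_eq_sum (p : Ω → ℝ) (Z : Ω → α) :
    ent p Z = -∑ ω, p ω * Real.logb 2 (pr p Z (Z ω)) := by
  rw [ent, ← sum_pr_mul p Z (fun z => Real.logb 2 (pr p Z z))]

lemma sum_pr (p : Ω → ℝ) (Z : Ω → α) :
    ∑ z ∈ Finset.univ.image Z, pr p Z z = ∑ ω, p ω := by
  have := sum_pr_mul p Z (fun _ => (1:ℝ))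
  simpa using this

lemma p_le_pr {p : Ω → ℝ} (hp : ∀ ω, 0 ≤ p ω) (Z : Ω → α) (ω : Ω) :
    p ω ≤ pr p Z (Z ω) :=
  Finset.single_le_sum (fun ω _ => hp ω) (Finset.mem_filter.2 ⟨Finset.mem_univ ω, rfl⟩)

lemma pr_le_pr_comp {p : Ω → ℝ} (hp : ∀ ω, 0 ≤ p ω) (A : Ω → α) (f : α → β) (a : α) :
    pr p A a ≤ pr p (fun ω => f (A ω)) (f a) := by
  apply Finset.sum_le_sum_of_subset_of_nonneg
  · intro ω hω
    rw [Finset.mem_filter] at hω ⊢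
    exact ⟨hω.1, by simp only []; rw [hω.2]⟩
  · exact fun ω _ _ => hp ω

lemma ent_congr {p : Ω → ℝ} {q : Ω' → ℝ} {Z : Ω → α} {Z' : Ω' → α}
    (h : ∀ z, pr p Z z = pr q Z' z) : ent p Z = ent q Z' := by
  have key : ∀ (T : Finset α), Finset.univ.image Z ⊆ T → Finset.univ.image Z' ⊆ T →
      ent p Z = -∑ z ∈ T, pr p Z z * Real.logb 2 (pr p Z z) := by
    intro T hT _
    rw [ent, Finset.sum_subset hT]
    intro z _ hz
    rw [pr_zero_of_not_mem hz, zero_mul]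
  have key' : ∀ (T : Finset α), Finset.univ.image Z' ⊆ T →
      ent q Z' = -∑ z ∈ T, pr q Z' z * Real.logb 2 (pr q Z' z) := by
    intro T hT
    rw [ent, Finset.sum_subset hT]
    intro z _ hz
    rw [pr_zero_of_not_mem hz, zero_mul]
  set T := Finset.univ.image Z ∪ Finset.univ.image Z' with hTdef
  rw [key T Finset.subset_union_left Finset.subset_union_right,
    key' T Finset.subset_union_right]
  congr 1
  exact Finset.sum_congr rfl fun z _ => by rw [h z]

lemma mutInfo_congr {p : Ω → ℝ} {q : Ω' → ℝ} {A : Ω → α} {B : Ω → β}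
    {A' : Ω' → α} {B' : Ω' → β}
    (hA : ∀ a, pr p A a = pr q A' a) (hB : ∀ b, pr p B b = pr q B' b)
    (hAB : ∀ z : α × β, pr p (fun ω => (A ω, B ω)) z = pr q (fun ω => (A' ω, B' ω)) z) :
    mutInfo p A B = mutInfo q A' B' := by
  rw [mutInfo, mutInfo, ent_congr hA, ent_congr hB, ent_congr hAB]

/-- marginalization: sum out the second coordinate over any superset of its image -/
lemma pr_marg_right {p : Ω → ℝ} (A : Ω → α) (B : Ω → β) (a : α) {T : Finset β}
    (hT : Finset.univ.image B ⊆ T) :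
    pr p A a = ∑ b ∈ T, pr p (fun ω => (A ω, B ω)) (a, b) := by
  simp only [pr_eq_sum_ite, Prod.mk.injEq]
  rw [Finset.sum_comm]
  refine Finset.sum_congr rfl fun ω _ => ?_
  by_cases hA : A ω = a
  · rw [Finset.sum_eq_single_of_mem (B ω) (hT (Finset.mem_image_of_mem B (Finset.mem_univ ω)))]
    · simp [hA]
    · intro b _ hb; simp [Ne.symm hb]
  · simp [hA]

lemma pr_marg_left {p : Ω → ℝ} (A : Ω → α) (B : Ω → β) (b : β) {T : Finset α}
    (hT : Finset.univ.image A ⊆ T) :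
    pr p B b = ∑ a ∈ T, pr p (fun ω => (A ω, B ω)) (a, b) := by
  simp only [pr_eq_sum_ite, Prod.mk.injEq]
  rw [Finset.sum_comm]
  refine Finset.sum_congr rfl fun ω _ => ?_
  by_cases hB : B ω = b
  · rw [Finset.sum_eq_single_of_mem (A ω) (hT (Finset.mem_image_of_mem A (Finset.mem_univ ω)))]
    · simp [hB]
    · intro a _ ha; simp [Ne.symm ha]
  · simp [hB]

section DP
variable {Ω α β γ : Type*} [Fintype Ω] [DecidableEq α] [DecidableEq β] [DecidableEq γ]

lemma mutInfo_diff_eq (p : Ω → ℝ) (A : Ω → α) (Y : Ω → γ) (W : Ω → β) :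
    mutInfo p A Y - mutInfo p W Y
      = ∑ ω, p ω * (Real.logb 2 (pr p (fun ω => (A ω, Y ω)) (A ω, Y ω))
          + Real.logb 2 (pr p W (W ω))
          - Real.logb 2 (pr p A (A ω))
          - Real.logb 2 (pr p (fun ω => (W ω, Y ω)) (W ω, Y ω))) := by
  have expand : ∀ (L1 L2 L3 L4 : Ω → ℝ),
      (∑ ω, p ω * (L1 ω + L2 ω - L3 ω - L4 ω))
        = ((∑ ω, p ω * L1 ω) + (∑ ω, p ω * L2 ω))
          - ((∑ ω, p ω * L3 ω) + (∑ ω, p ω * L4 ω)) := by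
    intro L1 L2 L3 L4
    rw [← Finset.sum_add_distrib, ← Finset.sum_add_distrib, ← Finset.sum_sub_distrib]
    exact Finset.sum_congr rfl fun ω _ => by ring
  rw [mutInfo, mutInfo, ent_eq_sum, ent_eq_sum, ent_eq_sum, ent_eq_sum, ent_eq_sum, expand]
  ring

lemma mutInfo_comp_eq {p : Ω → ℝ} (hp : ∀ ω, 0 ≤ p ω) (A : Ω → α) (Y : Ω → γ) (W : Ω → β)
    (hfac : ∀ ω, p ω ≠ 0 →
      pr p (fun ω => (A ω, Y ω)) (A ω, Y ω) * pr p W (W ω)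
        = pr p A (A ω) * pr p (fun ω => (W ω, Y ω)) (W ω, Y ω)) :
    mutInfo p A Y = mutInfo p W Y := by
  have h := mutInfo_diff_eq p A Y W
  have hz : ∀ ω ∈ (Finset.univ : Finset Ω), p ω * (Real.logb 2 (pr p (fun ω => (A ω, Y ω)) (A ω, Y ω))
      + Real.logb 2 (pr p W (W ω)) - Real.logb 2 (pr p A (A ω))
      - Real.logb 2 (pr p (fun ω => (W ω, Y ω)) (W ω, Y ω))) = 0 := by
    intro ω _
    by_cases hω : p ω = 0
    · rw [hω, zero_mul]
    · have hpos : 0 < p ω := lt_of_le_of_ne (hp ω) (Ne.symm hω)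
      have h1 : 0 < pr p (fun ω => (A ω, Y ω)) (A ω, Y ω) :=
        lt_of_lt_of_le hpos (p_le_pr hp _ ω)
      have h2 : 0 < pr p W (W ω) := lt_of_lt_of_le hpos (p_le_pr hp _ ω)
      have h3 : 0 < pr p A (A ω) := lt_of_lt_of_le hpos (p_le_pr hp _ ω)
      have h4 : 0 < pr p (fun ω => (W ω, Y ω)) (W ω, Y ω) :=
        lt_of_lt_of_le hpos (p_le_pr hp _ ω)
      have := hfac ω hω
      have hlog : Real.logb 2 (pr p (fun ω => (A ω, Y ω)) (A ω, Y ω))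
          + Real.logb 2 (pr p W (W ω))
          = Real.logb 2 (pr p A (A ω))
            + Real.logb 2 (pr p (fun ω => (W ω, Y ω)) (W ω, Y ω)) := by
        rw [← Real.logb_mul h1.ne' h2.ne', ← Real.logb_mul h3.ne' h4.ne', this]
      rw [show Real.logb 2 (pr p (fun ω => (A ω, Y ω)) (A ω, Y ω))
          + Real.logb 2 (pr p W (W ω)) - Real.logb 2 (pr p A (A ω))
          - Real.logb 2 (pr p (fun ω => (W ω, Y ω)) (W ω, Y ω)) = 0 by linarith, mul_zero]
  rw [Finset.sum_eq_zero hz] at h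
  linarith

lemma mutInfo_comp_le {p : Ω → ℝ} (hp : ∀ ω, 0 ≤ p ω) (hp1 : ∑ ω, p ω = 1)
    (A : Ω → α) (Y : Ω → γ) (f : α → β) (W : Ω → β) (hW : ∀ ω, W ω = f (A ω)) :
    mutInfo p W Y ≤ mutInfo p A Y := by
  have hlog2 : (0:ℝ) < Real.log 2 := Real.log_pos (by norm_num)
  set prA := pr p A with hprA
  set prW := pr p W with hprW
  set prAY := pr p (fun ω => (A ω, Y ω)) with hprAY
  set prWY := pr p (fun ω => (W ω, Y ω)) with hprWY
  set g : α × γ → ℝ := fun z => prA z.1 * prWY (f z.1, z.2) / (prAY z * prW (f z.1))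
    with hg
  -- termwise lower bound
  have hterm : ∀ ω, (p ω - p ω * g (A ω, Y ω)) / Real.log 2
      ≤ p ω * (Real.logb 2 (prAY (A ω, Y ω)) + Real.logb 2 (prW (W ω))
        - Real.logb 2 (prA (A ω)) - Real.logb 2 (prWY (W ω, Y ω))) := by
    intro ω
    by_cases hω : p ω = 0
    · simp [hω]
    · have hpos : 0 < p ω := lt_of_le_of_ne (hp ω) (Ne.symm hω)
      have h1 : 0 < prAY (A ω, Y ω) := lt_of_lt_of_le hpos (p_le_pr hp _ ω)
      have h2 : 0 < prW (W ω) := lt_of_lt_of_le hpos (p_le_pr hp _ ω)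
      have h3 : 0 < prA (A ω) := lt_of_lt_of_le hpos (p_le_pr hp _ ω)
      have h4 : 0 < prWY (W ω, Y ω) := lt_of_lt_of_le hpos (p_le_pr hp _ ω)
      have hgpos : 0 < g (A ω, Y ω) := by
        rw [hg]
        simp only [← hW ω]
        exact div_pos (mul_pos h3 h4) (mul_pos h1 h2)
      have hlb : Real.log (g (A ω, Y ω)) ≤ g (A ω, Y ω) - 1 :=
        Real.log_le_sub_one_of_pos hgpos
      have hlogg : Real.log (g (A ω, Y ω))
          = Real.log (prA (A ω)) + Real.log (prWY (W ω, Y ω))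
            - Real.log (prAY (A ω, Y ω)) - Real.log (prW (W ω)) := by
        rw [hg]
        simp only [← hW ω]
        rw [Real.log_div (mul_pos h3 h4).ne' (mul_pos h1 h2).ne',
          Real.log_mul h3.ne' h4.ne', Real.log_mul h1.ne' h2.ne']
        ring
      have hbr : (1 - g (A ω, Y ω)) / Real.log 2
          ≤ Real.logb 2 (prAY (A ω, Y ω)) + Real.logb 2 (prW (W ω))
            - Real.logb 2 (prA (A ω)) - Real.logb 2 (prWY (W ω, Y ω)) := by
        simp only [Real.logb]
        rw [← add_div, div_sub_div_same, div_sub_div_same]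
        have h15 : 1 - g (A ω, Y ω) ≤ Real.log (prAY (A ω, Y ω)) + Real.log (prW (W ω))
            - Real.log (prA (A ω)) - Real.log (prWY (W ω, Y ω)) := by linarith [hlb, hlogg]
        gcongr
      calc (p ω - p ω * g (A ω, Y ω)) / Real.log 2
          = p ω * ((1 - g (A ω, Y ω)) / Real.log 2) := by ring
        _ ≤ _ := by
            apply mul_le_mul_of_nonneg_left hbr (hp ω)
  -- the sum of p * g is at most 1
  have hsumg : ∑ ω, p ω * g (A ω, Y ω) ≤ 1 := by
    rw [← sum_pr_mul p (fun ω => (A ω, Y ω)) g]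
    have step1 : ∑ z ∈ Finset.univ.image (fun ω => (A ω, Y ω)),
        pr p (fun ω => (A ω, Y ω)) z * g z
        ≤ ∑ z ∈ Finset.univ.image (fun ω => (A ω, Y ω)),
          prA z.1 * prWY (f z.1, z.2) / prW (f z.1) := by
      apply Finset.sum_le_sum
      intro z _
      by_cases hz : prAY z = 0
      · rw [← hprAY, hz, zero_mul]
        exact div_nonneg (mul_nonneg (pr_nonneg hp _ _) (pr_nonneg hp _ _)) (pr_nonneg hp _ _)
      · by_cases hw : prW (f z.1) = 0
        · simp only [hg, hw, mul_zero, div_zero]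
          positivity
        · rw [← hprAY, hg]
          apply le_of_eq
          field_simp
    have step2 : ∑ z ∈ Finset.univ.image (fun ω => (A ω, Y ω)),
        prA z.1 * prWY (f z.1, z.2) / prW (f z.1)
        ≤ ∑ z ∈ (Finset.univ.image A) ×ˢ (Finset.univ.image Y),
          prA z.1 * prWY (f z.1, z.2) / prW (f z.1) := by
      apply Finset.sum_le_sum_of_subset_of_nonneg
      · intro z hz
        rcases Finset.mem_image.1 hz with ⟨ω, _, rfl⟩
        exact Finset.mem_product.2 ⟨Finset.mem_image_of_mem A (Finset.mem_univ ω),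
          Finset.mem_image_of_mem Y (Finset.mem_univ ω)⟩
      · intro z _ _
        exact div_nonneg (mul_nonneg (pr_nonneg hp _ _) (pr_nonneg hp _ _)) (pr_nonneg hp _ _)
    have step3 : ∑ z ∈ (Finset.univ.image A) ×ˢ (Finset.univ.image Y),
        prA z.1 * prWY (f z.1, z.2) / prW (f z.1) ≤ 1 := by
      rw [Finset.sum_product]
      have inner : ∀ a, ∑ y ∈ Finset.univ.image Y, prA a * prWY (f a, y) / prW (f a)
          = prA a / prW (f a) * prW (f a) := by
        intro a
        have hr : ∀ y, prA a * prWY (f a, y) / prW (f a)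
            = prA a / prW (f a) * prWY (f a, y) := fun y => by ring
        simp only [hr]
        rw [← Finset.mul_sum]
        congr 1
        exact (pr_marg_right W Y (f a) (le_refl _)).symm
      calc ∑ a ∈ Finset.univ.image A, ∑ y ∈ Finset.univ.image Y,
            prA a * prWY (f a, y) / prW (f a)
          ≤ ∑ a ∈ Finset.univ.image A, prA a := by
            apply Finset.sum_le_sum
            intro a _
            rw [inner a]
            by_cases hw : prW (f a) = 0
            · rw [hw, mul_zero]
              exact pr_nonneg hp _ _
            · rw [div_mul_cancel₀ _ hw]
        _ = 1 := by rw [hprA, sum_pr, hp1]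
    linarith
  -- conclude
  have hdiff := mutInfo_diff_eq p A Y W
  have hfin : 0 ≤ mutInfo p A Y - mutInfo p W Y := by
    rw [hdiff]
    have hsum := Finset.sum_le_sum (fun ω (_ : ω ∈ Finset.univ) => hterm ω)
    calc (0:ℝ) ≤ (∑ ω, (p ω - p ω * g (A ω, Y ω))) / Real.log 2 := by
          rw [Finset.sum_sub_distrib, hp1]
          apply div_nonneg _ hlog2.le
          linarith [hsumg]
      _ = ∑ ω, (p ω - p ω * g (A ω, Y ω)) / Real.log 2 := Finset.sum_div _ _ _
      _ ≤ _ := hsum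
  linarith
end DP
end Helpers

/-- One-step reduction lemma: with `(X, S) ~ π`, `W = S - X`, `Y` generated
by a feasible conditional pmf `a`, and `ã(y | x, s) = b(y | s - x)`:
(1) `(W, Y)` and `(W, Ỹ)` have the same joint law (hence same output marginals);
(2) the conditional law of `S₊ = W + Y` given `Y` is invariant;
(3) `I(X, S; Y) ≥ I(W; Y) = I(X, S; Ỹ) = I(W; Ỹ) = I(b; ξ)`. -/
theorem one_step_reduction (mx my ms : ℕ) (hxy : mx ≤ my)
    (π : Fin (mx + 1) × Fin (ms + 1) → ℝ) (hπ : IsPMF π)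
    (a : Fin (mx + 1) → Fin (ms + 1) → Fin (my + 1) → ℝ)
    (ha : ∀ x s, IsPMF (a x s))
    (hsupp : ∀ x s y, a x s y ≠ 0 →
      0 ≤ ((s : ℕ) : ℤ) - ((x : ℕ) : ℤ) + ((y : ℕ) : ℤ) ∧
      ((s : ℕ) : ℤ) - ((x : ℕ) : ℤ) + ((y : ℕ) : ℤ) ≤ (ms : ℤ)) :
    -- the two joint laws on `𝒳 × 𝒮 × 𝒴`
    let p : Fin (mx + 1) × Fin (ms + 1) × Fin (my + 1) → ℝ :=
      fun ω => π (ω.1, ω.2.1) * a ω.1 ω.2.1 ω.2.2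
    let pt : Fin (mx + 1) × Fin (ms + 1) × Fin (my + 1) → ℝ :=
      fun ω => π (ω.1, ω.2.1) *
        bOf mx my ms π a (((ω.2.1 : ℕ) : ℤ) - ((ω.1 : ℕ) : ℤ)) ω.2.2
    let Wv : Fin (mx + 1) × Fin (ms + 1) × Fin (my + 1) → ℤ :=
      fun ω => ((ω.2.1 : ℕ) : ℤ) - ((ω.1 : ℕ) : ℤ)
    let Yv : Fin (mx + 1) × Fin (ms + 1) × Fin (my + 1) → Fin (my + 1) := fun ω => ω.2.2
    let Splus : Fin (mx + 1) × Fin (ms + 1) × Fin (my + 1) → ℤ :=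
      fun ω => Wv ω + ((ω.2.2 : ℕ) : ℤ)
    -- (1) identical joint laws of (W, Y), hence identical output marginals
    ((∀ (w : ℤ) (y : Fin (my + 1)),
        pr p (fun ω => (Wv ω, Yv ω)) (w, y) = pr pt (fun ω => (Wv ω, Yv ω)) (w, y)) ∧
      (∀ y : Fin (my + 1), pr p Yv y = pr pt Yv y)) ∧
    -- (2) identical conditional law of S₊ given the output
    (∀ y : Fin (my + 1), pr p Yv y ≠ 0 →
      ∀ s : ℤ, pr p (fun ω => (Splus ω, Yv ω)) (s, y) / pr p Yv y
        = pr pt (fun ω => (Splus ω, Yv ω)) (s, y) / pr pt Yv y) ∧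
    -- (3) the information inequalities and identities
    (mutInfo p (fun ω => (ω.1, ω.2.1)) Yv ≥ mutInfo p Wv Yv ∧
      mutInfo p Wv Yv = mutInfo pt (fun ω => (ω.1, ω.2.1)) Yv ∧
      mutInfo pt (fun ω => (ω.1, ω.2.1)) Yv = mutInfo pt Wv Yv ∧
      mutInfo pt Wv Yv
        = mutInfo (pWY mx my ms π a) (fun ω => ((ω.1 : ℕ) : ℤ) - (mx : ℤ))
            (fun ω => ω.2)) := by
  intro p pt Wv Yv Splus
  have hp0 : ∀ ω, 0 ≤ p ω := fun ω => mul_nonneg (hπ.1 _) ((ha _ _).1 _)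
  -- the fiber sum N w y
  have hN : ∀ (w : ℤ) (y : Fin (my + 1)), pr p (fun ω => (Wv ω, Yv ω)) (w, y)
      = ∑ x : Fin (mx + 1), ∑ s : Fin (ms + 1),
          if ((s : ℕ) : ℤ) - ((x : ℕ) : ℤ) = w then π (x, s) * a x s y else 0 := by
    intro w y
    rw [pr_eq_sum_ite, Fintype.sum_prod_type]
    refine Finset.sum_congr rfl fun x _ => ?_
    rw [Fintype.sum_prod_type]
    refine Finset.sum_congr rfl fun s _ => ?_
    by_cases hc : ((s : ℕ) : ℤ) - ((x : ℕ) : ℤ) = w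
    · simp [Wv, Yv, p, Prod.ext_iff, hc]
    · simp [Wv, Yv, p, Prod.ext_iff, hc]
  have hNt : ∀ (w : ℤ) (y : Fin (my + 1)), pr pt (fun ω => (Wv ω, Yv ω)) (w, y)
      = xiPi mx ms π w * bOf mx my ms π a w y := by
    intro w y
    rw [pr_eq_sum_ite, Fintype.sum_prod_type, xiPi, Finset.sum_mul]
    refine Finset.sum_congr rfl fun x _ => ?_
    rw [Fintype.sum_prod_type, Finset.sum_mul]
    refine Finset.sum_congr rfl fun s _ => ?_
    by_cases hc : ((s : ℕ) : ℤ) - ((x : ℕ) : ℤ) = w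
    · simp only [Wv, Yv, pt, Prod.ext_iff, hc]
      simp [hc]
    · simp [Wv, Yv, pt, Prod.ext_iff, hc]
  have hξ0 : ∀ w : ℤ, xiPi mx ms π w = 0 → ∀ (x : Fin (mx + 1)) (s : Fin (ms + 1)),
      ((s : ℕ) : ℤ) - ((x : ℕ) : ℤ) = w → π (x, s) = 0 := by
    intro w hw x s hc
    rw [xiPi] at hw
    have hnn : ∀ x' ∈ (Finset.univ : Finset (Fin (mx + 1))), (0:ℝ) ≤ ∑ s' : Fin (ms + 1),
        if ((s' : ℕ) : ℤ) - ((x' : ℕ) : ℤ) = w then π (x', s') else 0 :=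
      fun x' _ => Finset.sum_nonneg fun s' _ => by split_ifs; exacts [hπ.1 _, le_rfl]
    have h1 := (Finset.sum_eq_zero_iff_of_nonneg hnn).1 hw x (Finset.mem_univ x)
    have hnn2 : ∀ s' ∈ (Finset.univ : Finset (Fin (ms + 1))), (0:ℝ) ≤
        if ((s' : ℕ) : ℤ) - ((x : ℕ) : ℤ) = w then π (x, s') else 0 :=
      fun s' _ => by split_ifs; exacts [hπ.1 _, le_rfl]
    have h2 := (Finset.sum_eq_zero_iff_of_nonneg hnn2).1 h1 s (Finset.mem_univ s)
    rwa [if_pos hc] at h2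
  -- part (1): equality of the joint laws of (W, Y)
  have hpair : ∀ (w : ℤ) (y : Fin (my + 1)),
      pr p (fun ω => (Wv ω, Yv ω)) (w, y) = pr pt (fun ω => (Wv ω, Yv ω)) (w, y) := by
    intro w y
    rw [hN, hNt]
    by_cases hξ : xiPi mx ms π w = 0
    · rw [hξ, zero_mul]
      apply Finset.sum_eq_zero
      intro x _
      apply Finset.sum_eq_zero
      intro s _
      by_cases hc : ((s : ℕ) : ℤ) - ((x : ℕ) : ℤ) = w
      · rw [if_pos hc, hξ0 w hξ x s hc, zero_mul]
      · rw [if_neg hc]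
    · rw [bOf, mul_div_cancel₀ _ hξ]
      refine Finset.sum_congr rfl fun x _ => Finset.sum_congr rfl fun s _ => ?_
      by_cases hc : ((s : ℕ) : ℤ) - ((x : ℕ) : ℤ) = w
      · rw [if_pos hc, if_pos hc, mul_comm]
      · rw [if_neg hc, if_neg hc]
  have hYm : ∀ y : Fin (my + 1), pr p Yv y = pr pt Yv y := by
    intro y
    rw [pr_marg_left Wv Yv y (Finset.Subset.refl (Finset.univ.image Wv)),
      pr_marg_left Wv Yv y (Finset.Subset.refl (Finset.univ.image Wv))]
    exact Finset.sum_congr rfl fun w _ => hpair w y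
  have hWm : ∀ w : ℤ, pr p Wv w = pr pt Wv w := by
    intro w
    rw [pr_marg_right Wv Yv w (Finset.subset_univ _),
      pr_marg_right Wv Yv w (Finset.subset_univ _)]
    exact Finset.sum_congr rfl fun y _ => hpair w y
  refine ⟨⟨hpair, hYm⟩, ?_, ?_⟩
  · -- part (2)
    intro y hy s
    have e : ∀ q : Fin (mx + 1) × Fin (ms + 1) × Fin (my + 1) → ℝ,
        pr q (fun ω => (Splus ω, Yv ω)) (s, y)
          = pr q (fun ω => (Wv ω, Yv ω)) (s - ((y : ℕ) : ℤ), y) := by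
      intro q
      rw [pr_eq_sum_ite, pr_eq_sum_ite]
      refine Finset.sum_congr rfl fun ω _ => ?_
      congr 1
      simp only [Splus, Wv, Yv, Prod.mk.injEq, eq_iff_iff]
      constructor
      · rintro ⟨h1, h2⟩
        subst h2
        exact ⟨by omega, rfl⟩
      · rintro ⟨h1, h2⟩
        subst h2
        exact ⟨by omega, rfl⟩
    rw [e p, e pt, hpair, hYm y]
  -- part (3)
  have hb0 : ∀ w y, 0 ≤ bOf mx my ms π a w y := by
    intro w y
    rw [bOf]
    apply div_nonneg
    · apply Finset.sum_nonneg
      intro x _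
      apply Finset.sum_nonneg
      intro s _
      split_ifs; exacts [mul_nonneg ((ha _ _).1 _) (hπ.1 _), le_rfl]
    · rw [xiPi]
      apply Finset.sum_nonneg
      intro x _
      apply Finset.sum_nonneg
      intro s _
      split_ifs; exacts [hπ.1 _, le_rfl]
  have hpt0 : ∀ ω, 0 ≤ pt ω := fun ω => mul_nonneg (hπ.1 _) (hb0 _ _)
  have hp1 : ∑ ω, p ω = 1 := by
    rw [Fintype.sum_prod_type]
    have : ∀ x : Fin (mx + 1), ∑ sy : Fin (ms + 1) × Fin (my + 1), p (x, sy)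
        = ∑ s : Fin (ms + 1), π (x, s) := by
      intro x
      rw [Fintype.sum_prod_type]
      refine Finset.sum_congr rfl fun s _ => ?_
      simp only [p]
      rw [← Finset.mul_sum, (ha x s).2, mul_one]
    simp only [this]
    rw [← Fintype.sum_prod_type]
    exact hπ.2
  set A : Fin (mx + 1) × Fin (ms + 1) × Fin (my + 1) → Fin (mx + 1) × Fin (ms + 1) :=
    fun ω => (ω.1, ω.2.1) with hA
  have hle : mutInfo p Wv Yv ≤ mutInfo p A Yv :=
    mutInfo_comp_le hp0 hp1 A Yv
      (fun z : Fin (mx + 1) × Fin (ms + 1) => ((z.2 : ℕ) : ℤ) - ((z.1 : ℕ) : ℤ)) Wv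
      (fun ω => rfl)
  have hsingle : ∀ ω : Fin (mx + 1) × Fin (ms + 1) × Fin (my + 1),
      pr pt (fun ω' => (A ω', Yv ω')) (A ω, Yv ω) = pt ω := by
    intro ω
    rw [pr]
    have hfil : Finset.univ.filter (fun ω' => (A ω', Yv ω') = (A ω, Yv ω)) = {ω} := by
      ext ⟨x', s', y'⟩
      obtain ⟨x, s, y⟩ := ω
      simp only [A, Yv, Prod.ext_iff, Finset.mem_filter, Finset.mem_univ, true_and,
        Finset.mem_singleton]
      tauto
    rw [hfil, Finset.sum_singleton]
  have hbsum : ∀ ω : Fin (mx + 1) × Fin (ms + 1) × Fin (my + 1),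
      pr pt A (A ω) = π (A ω) * ∑ y', bOf mx my ms π a (Wv ω) y' := by
    intro ω
    rw [pr_marg_right A Yv (A ω) (Finset.subset_univ _), Finset.mul_sum]
    refine Finset.sum_congr rfl fun y' _ => ?_
    have h := hsingle (ω.1, ω.2.1, y')
    simpa [A, Yv, pt, Wv] using h
  have hWsum : ∀ ω : Fin (mx + 1) × Fin (ms + 1) × Fin (my + 1),
      pr pt Wv (Wv ω) = xiPi mx ms π (Wv ω) * ∑ y', bOf mx my ms π a (Wv ω) y' := by
    intro ω
    rw [pr_marg_right Wv Yv (Wv ω) (Finset.subset_univ _), Finset.mul_sum]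
    exact Finset.sum_congr rfl fun y' _ => hNt (Wv ω) y'
  have heq2 : mutInfo pt A Yv = mutInfo pt Wv Yv := by
    apply mutInfo_comp_eq hpt0 A Yv Wv
    intro ω _
    rw [hsingle ω, hbsum ω, hWsum ω, hNt (Wv ω) (Yv ω)]
    show π (A ω) * bOf mx my ms π a (Wv ω) (Yv ω) * _ = _
    ring
  have heq1 : mutInfo p Wv Yv = mutInfo pt Wv Yv :=
    mutInfo_congr hWm hYm (fun z => hpair z.1 z.2)
  -- the reduced two-letter law
  have hpair2 : ∀ (w : ℤ) (y : Fin (my + 1)),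
      pr pt (fun ω => (Wv ω, Yv ω)) (w, y)
        = pr (pWY mx my ms π a)
            (fun ω => (((ω.1 : ℕ) : ℤ) - (mx : ℤ), ω.2)) (w, y) := by
    intro w y
    have hrhs : pr (pWY mx my ms π a)
        (fun ω => (((ω.1 : ℕ) : ℤ) - (mx : ℤ), ω.2)) (w, y)
        = ∑ i : Fin (mx + ms + 1),
            if ((i : ℕ) : ℤ) - (mx : ℤ) = w then pWY mx my ms π a (i, y) else 0 := by
      rw [pr_eq_sum_ite, Fintype.sum_prod_type]
      refine Finset.sum_congr rfl fun i _ => ?_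
      by_cases hc : ((i : ℕ) : ℤ) - (mx : ℤ) = w
      · simp [Prod.ext_iff, hc]
      · simp [Prod.ext_iff, hc]
    rw [← hpair w y, hN, hrhs]
    by_cases hw : -(mx : ℤ) ≤ w ∧ w ≤ (ms : ℤ)
    · have hi0 : (w + mx).toNat < mx + ms + 1 := by omega
      set i0 : Fin (mx + ms + 1) := ⟨(w + mx).toNat, hi0⟩ with hi0def
      have hv : ((i0 : ℕ) : ℤ) - (mx : ℤ) = w := by
        simp only [hi0def]
        omega
      rw [Finset.sum_eq_single i0]
      · rw [if_pos hv, pWY]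
        refine Finset.sum_congr rfl fun x _ => Finset.sum_congr rfl fun s _ => ?_
        rw [hv]
      · intro i _ hi
        rw [if_neg]
        intro hc
        apply hi
        have : (i : ℕ) = (w + mx).toNat := by omega
        exact Fin.ext this
      · intro h
        exact absurd (Finset.mem_univ i0) h
    · rw [Finset.sum_eq_zero, Finset.sum_eq_zero]
      · intro i _
        rw [if_neg]
        have := i.isLt
        omega
      · intro x _
        rw [Finset.sum_eq_zero]
        intro s _
        rw [if_neg]
        have := s.isLt
        have := x.isLt
        omega
  have hA'm : ∀ w : ℤ, pr pt Wv w
      = pr (pWY mx my ms π a) (fun ω => ((ω.1 : ℕ) : ℤ) - (mx : ℤ)) w := by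
    intro w
    rw [pr_marg_right Wv Yv w (Finset.subset_univ _),
      pr_marg_right (fun ω : Fin (mx + ms + 1) × Fin (my + 1) => ((ω.1 : ℕ) : ℤ) - (mx : ℤ))
        (fun ω => ω.2) w (Finset.subset_univ _)]
    exact Finset.sum_congr rfl fun y _ => hpair2 w y
  have hB'm : ∀ y : Fin (my + 1), pr pt Yv y
      = pr (pWY mx my ms π a) (fun ω => ω.2) y := by
    intro y
    set T := (Finset.univ.image Wv) ∪
      (Finset.univ.image (fun ω : Fin (mx + ms + 1) × Fin (my + 1) =>
        ((ω.1 : ℕ) : ℤ) - (mx : ℤ))) with hT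
    rw [pr_marg_left Wv Yv y (Finset.subset_union_left (s₂ := _)),
      pr_marg_left (fun ω : Fin (mx + ms + 1) × Fin (my + 1) => ((ω.1 : ℕ) : ℤ) - (mx : ℤ))
        (fun ω => ω.2) y (Finset.subset_union_right (s₁ := _))]
    exact Finset.sum_congr rfl fun w _ => hpair2 w y
  have hfinal : mutInfo pt Wv Yv
      = mutInfo (pWY mx my ms π a) (fun ω => ((ω.1 : ℕ) : ℤ) - (mx : ℤ)) (fun ω => ω.2) :=
    mutInfo_congr hA'm hB'm (fun z => hpair2 z.1 z.2)
  exact ⟨hle, heq1.trans heq2.symm, heq2, hfinal⟩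
end SmartMeter
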